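/- (Existence of the Fibonacci basis.) Let K be a field, F a field extension of K with finite K-dimension ℓ ≥ 1, and let α ∈ F be such that the powers 1, α, α², …, α^{ℓ−1} form a K-basis of F. Then there exists a K-basis b : Basis (Fin ℓ) K F with b 0 = 1 such that multiplication by α acts as a left shift on coordinates: for every x ∈ F and every index i : Fin ℓ with (i : ℕ) + 1 < ℓ, one has b.repr (α * x) i = b.repr x (i + 1). -/

import Mathlib

/-- **Existence of the Fibonacci basis.** If `F/K` is a field extension of dimension `ℓ` and
the powers `1, α, …, α^(ℓ-1)` form a `K`-basis of `F`, then there is a `K`-basis `b` of `F`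
with `b 0 = 1` in whose coordinates multiplication by `α` acts as a left shift. -/
theorem stmt8 (K F : Type*) [Field K] [Field F] [Algebra K F] (ℓ : ℕ) (hℓ : 0 < ℓ)
    [FiniteDimensional K F] (hrank : Module.finrank K F = ℓ)
    (α : F) (pb : Module.Basis (Fin ℓ) K F) (hpb : ∀ i : Fin ℓ, pb i = α ^ (i : ℕ)) :
    ∃ b : Module.Basis (Fin ℓ) K F, b ⟨0, hℓ⟩ = 1 ∧
      ∀ (x : F) (i : Fin ℓ) (h : (i : ℕ) + 1 < ℓ),
        b.repr (α * x) i = b.repr x ⟨(i : ℕ) + 1, h⟩ := by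
  set i0 : Fin ℓ := ⟨0, hℓ⟩ with hi0def
  set g : F →ₗ[K] K := pb.coord i0 with hgdef
  have hg : ∀ j : Fin ℓ, g (α ^ (j : ℕ)) = if j = i0 then 1 else 0 := by
    intro j
    rw [← hpb j, hgdef, Module.Basis.coord_apply, Module.Basis.repr_self, Finsupp.single_apply]
  set φ : F →ₗ[K] (Fin ℓ → K) :=
    LinearMap.pi (fun i : Fin ℓ => g ∘ₗ LinearMap.mulLeft K (α ^ (i : ℕ))) with hφdef
  have hφ : ∀ (x : F) (i : Fin ℓ), φ x i = g (α ^ (i : ℕ) * x) := by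
    intro x i; rfl
  have hinj : Function.Injective φ := by
    rw [injective_iff_map_eq_zero]
    intro x hx
    by_contra hx0
    have hvan : ∀ j : Fin ℓ, g (α ^ (j : ℕ) * x) = 0 := by
      intro j
      have := congrFun hx j
      rw [hφ] at this
      simpa using this
    have hgz : ∀ y : F, g y = 0 := by
      intro y
      have hy : y = x * (x⁻¹ * y) := by field_simp
      rw [hy]
      have := Module.Basis.linearCombination_repr pb (x⁻¹ * y)
      rw [← this]
      rw [Finsupp.linearCombination_apply, Finsupp.sum, Finset.mul_sum, map_sum]
      refine Finset.sum_eq_zero fun j _ => ?_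
      rw [hpb j, mul_smul_comm, map_smul]
      rw [show x * α ^ (j : ℕ) = α ^ (j : ℕ) * x from mul_comm _ _, hvan j, smul_zero]
    have h1 := hg i0
    rw [hgz] at h1
    simp at h1
  have hrank' : Module.finrank K F = Module.finrank K (Fin ℓ → K) := by
    simp [hrank]
  let e : F ≃ₗ[K] (Fin ℓ → K) := LinearEquiv.ofBijective φ
    ⟨hinj, (LinearMap.injective_iff_surjective_of_finrank_eq_finrank hrank').mp hinj⟩
  have he : ∀ (x : F) (i : Fin ℓ), e x i = g (α ^ (i : ℕ) * x) := fun x i => hφ x i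
  set b : Module.Basis (Fin ℓ) K F := Module.Basis.ofEquivFun e with hbdef
  have hrepr : ∀ (x : F) (i : Fin ℓ), b.repr x i = g (α ^ (i : ℕ) * x) := by
    intro x i
    rw [hbdef, Module.Basis.ofEquivFun_repr_apply, he]
  refine ⟨b, ?_, ?_⟩
  · apply b.repr.injective
    rw [b.repr_self]
    ext j
    rw [hrepr, mul_one, hg j, Finsupp.single_apply]
    by_cases h0 : j = i0 <;> simp [h0, eq_comm]
  · intro x i h
    rw [hrepr, hrepr]
    have harg : α ^ (i : ℕ) * (α * x)
        = α ^ (((⟨(i : ℕ) + 1, h⟩ : Fin ℓ) : ℕ)) * x := by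
      simp only [Fin.val_mk]
      rw [pow_succ, mul_assoc]
    rw [harg]
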